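/- Let G be an additive abelian group with at least two elements, m, n ≥ 2, A an m×n partial matrix over G, and B an (m−1)×(n−1) matrix over G. Suppose A is consistent with B. Then A has a unique completion C satisfying σ₋(C) = B if and only if the bipartite graph H_A is connected. -/

import Mathlib

/-- The balanced collapsing sum of an `(m+1) × (n+1)` matrix. -/
def bcs {G : Type*} [AddCommGroup G] {m n : ℕ}
    (A : Matrix (Fin (m + 1)) (Fin (n + 1)) G) : Matrix (Fin m) (Fin n) G :=
  fun i j => A i.castSucc j.castSucc - A i.succ j.castSucc
    - A i.castSucc j.succ + A i.succ j.succ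

/-- `C` is a completion of the partial matrix `A` (blank entries are `none`). -/
def IsCompletion {G : Type*} {m n : ℕ} (A : Matrix (Fin m) (Fin n) (Option G))
    (C : Matrix (Fin m) (Fin n) G) : Prop :=
  ∀ i j, A i j ≠ none → A i j = some (C i j)

/-- The bipartite graph `H_A` of a partial matrix `A`, on the vertex set
`{x_1, …, x_m} ⊕ {y_1, …, y_n}`, with an edge `(x_i, y_j)` whenever `a_{i,j} ≠ ∗`. -/
def HGraph {G : Type*} {m n : ℕ} (A : Matrix (Fin m) (Fin n) (Option G)) :
    SimpleGraph (Fin m ⊕ Fin n) :=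
  SimpleGraph.fromRel (fun u v =>
    ∃ i j, u = Sum.inl i ∧ v = Sum.inr j ∧ A i j ≠ none)

/-- A function that is constant across edges is constant along walks. -/
lemma walk_const {V G : Type*} {Γ : SimpleGraph V} (f : V → G)
    (hf : ∀ a b, Γ.Adj a b → f a = f b) :
    ∀ {u v : V}, Γ.Walk u v → f u = f v
  | _, _, .nil => rfl
  | _, _, .cons h p => (hf _ _ h).trans (walk_const f hf p)

lemma bcs_eq_zero_decomp {G : Type*} [AddCommGroup G] {m n : ℕ}
    (D : Matrix (Fin (m + 1)) (Fin (n + 1)) G) (h : bcs D = 0) :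
    ∀ i j, D i j = D i 0 + D 0 j - D 0 0 := by
  have key : ∀ (i : Fin m) (j : Fin n),
      D i.succ j.succ
        = D i.succ j.castSucc + D i.castSucc j.succ - D i.castSucc j.castSucc := by
    intro i j
    have h0 := congrFun (congrFun h i) j
    simp only [bcs, Matrix.zero_apply] at h0
    have h2 : D i.succ j.succ
        = (D i.castSucc j.castSucc - D i.succ j.castSucc - D i.castSucc j.succ
            + D i.succ j.succ)
          + (D i.succ j.castSucc + D i.castSucc j.succ - D i.castSucc j.castSucc) := by
      abel
    rw [h0, zero_add] at h2
    exact h2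
  intro i
  induction i using Fin.induction with
  | zero => intro j; abel
  | succ i ih =>
    intro j
    induction j using Fin.induction with
    | zero => abel
    | succ j ihj =>
      rw [key i j, ihj, ih j.castSucc, ih j.succ]
      abel

theorem stmt14 {G : Type*} [AddCommGroup G] [Nontrivial G] {m n : ℕ}
    (hm : 1 ≤ m) (hn : 1 ≤ n)
    (A : Matrix (Fin (m + 1)) (Fin (n + 1)) (Option G))
    (B : Matrix (Fin m) (Fin n) G)
    (hcons : ∃ C, IsCompletion A C ∧ bcs C = B) :
    (∃! C, IsCompletion A C ∧ bcs C = B) ↔ (HGraph A).Connected := by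
  classical
  obtain ⟨C, hC, hB⟩ := hcons
  have hadjgen : ∀ i j, A i j ≠ none → (HGraph A).Adj (Sum.inl i) (Sum.inr j) := by
    intro i j hij
    rw [HGraph, SimpleGraph.fromRel_adj]
    exact ⟨by simp, Or.inl ⟨i, j, rfl, rfl, hij⟩⟩
  constructor
  · -- uniqueness → connected
    intro huniq
    by_contra hnc
    have hpc : ¬ (HGraph A).Preconnected := fun hp => hnc ⟨hp⟩
    simp only [SimpleGraph.Preconnected] at hpc
    push_neg at hpc
    obtain ⟨u, v, huv⟩ := hpc
    obtain ⟨a, ha⟩ := exists_ne (0 : G)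
    set f : Fin (m + 1) ⊕ Fin (n + 1) → G :=
      fun w => if (HGraph A).Reachable u w then a else 0 with hf
    have hfadj : ∀ p q, (HGraph A).Adj p q → f p = f q := by
      intro p q hpq
      by_cases hr : (HGraph A).Reachable u p
      · simp only [hf, if_pos hr, if_pos (hr.trans hpq.reachable)]
      · have hq : ¬ (HGraph A).Reachable u q :=
          fun h => hr (h.trans hpq.symm.reachable)
        simp only [hf, if_neg hr, if_neg hq]
    have hfu : f u = a := if_pos (SimpleGraph.Reachable.refl u)
    have hfv : f v = 0 := if_neg huv
    have hne0 : ∃ i0 j0, f (Sum.inl i0) ≠ f (Sum.inr j0) := by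
      match u, v with
      | Sum.inl i, Sum.inl i' =>
        by_cases hr : (HGraph A).Reachable (Sum.inl i) (Sum.inr 0)
        · exact ⟨i', 0, by rw [hfv, hf]; simp only [if_pos hr]; exact ha.symm⟩
        · exact ⟨i, 0, by rw [hfu, hf]; simp only [if_neg hr]; exact ha⟩
      | Sum.inl i, Sum.inr j => exact ⟨i, j, by rw [hfu, hfv]; exact ha⟩
      | Sum.inr j, Sum.inl i => exact ⟨i, j, by rw [hfu, hfv]; exact ha.symm⟩
      | Sum.inr j, Sum.inr j' =>
        by_cases hr : (HGraph A).Reachable (Sum.inr j) (Sum.inl 0)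
        · exact ⟨0, j', by rw [hfv, hf]; simp only [if_pos hr]; exact ha⟩
        · exact ⟨0, j, by rw [hfu, hf]; simp only [if_neg hr]; exact ha.symm⟩
    obtain ⟨i0, j0, hij0⟩ := hne0
    set C2 : Matrix (Fin (m + 1)) (Fin (n + 1)) G :=
      fun i j => C i j + (f (Sum.inl i) - f (Sum.inr j)) with hC2def
    have hC2 : IsCompletion A C2 := by
      intro i j hij
      have heq : f (Sum.inl i) = f (Sum.inr j) := hfadj _ _ (hadjgen i j hij)
      have : C2 i j = C i j := by rw [hC2def]; simp [heq]
      rw [this]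
      exact hC i j hij
    have hB2 : bcs C2 = B := by
      funext i j
      have hb := congrFun (congrFun hB i) j
      simp only [bcs] at hb ⊢
      rw [← hb]
      simp only [hC2def]
      abel
    obtain ⟨C0, _, hun⟩ := huniq
    have e1 := hun C ⟨hC, hB⟩
    have e2 := hun C2 ⟨hC2, hB2⟩
    have e3 : C2 = C := e2.trans e1.symm
    have e4 := congrFun (congrFun e3 i0) j0
    rw [hC2def] at e4
    simp only at e4
    have : f (Sum.inl i0) - f (Sum.inr j0) = 0 := by
      have := add_eq_left.mp e4
      exact this
    exact hij0 (sub_eq_zero.mp this)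
  · -- connected → uniqueness
    intro hconn
    refine ⟨C, ⟨hC, hB⟩, ?_⟩
    rintro C' ⟨hC', hB'⟩
    set D : Matrix (Fin (m + 1)) (Fin (n + 1)) G := fun i j => C' i j - C i j with hD
    have hDbcs : bcs D = 0 := by
      funext i j
      have hb := congrFun (congrFun hB i) j
      have hb' := congrFun (congrFun hB' i) j
      simp only [bcs] at hb hb' ⊢
      rw [hD]
      simp only [Matrix.zero_apply]
      have : (C' i.castSucc j.castSucc - C i.castSucc j.castSucc)
          - (C' i.succ j.castSucc - C i.succ j.castSucc)
          - (C' i.castSucc j.succ - C i.castSucc j.succ)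
          + (C' i.succ j.succ - C i.succ j.succ)
          = (C' i.castSucc j.castSucc - C' i.succ j.castSucc
              - C' i.castSucc j.succ + C' i.succ j.succ)
            - (C i.castSucc j.castSucc - C i.succ j.castSucc
              - C i.castSucc j.succ + C i.succ j.succ) := by abel
      rw [this, hb, hb', sub_self]
    have hdec := bcs_eq_zero_decomp D hDbcs
    have hpat : ∀ i j, A i j ≠ none → D i j = 0 := by
      intro i j hij
      have h1 := hC i j hij
      have h2 := hC' i j hij
      rw [h1] at h2
      rw [hD]
      simp only
      rw [Option.some.injEq] at h2
      rw [← h2, sub_self]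
    set f : Fin (m + 1) ⊕ Fin (n + 1) → G :=
      Sum.elim (fun i => D i 0) (fun j => D 0 0 - D 0 j) with hfdef
    have hedge : ∀ i j, A i j ≠ none → f (Sum.inl i) = f (Sum.inr j) := by
      intro i j hij
      have h1 := hdec i j
      rw [hpat i j hij] at h1
      have h2 : D i 0 + D 0 j = D 0 0 := by
        have := h1.symm
        rwa [sub_eq_zero] at this
      simp only [hfdef, Sum.elim_inl, Sum.elim_inr]
      rw [eq_sub_iff_add_eq]
      exact h2
    have hfadj : ∀ p q, (HGraph A).Adj p q → f p = f q := by
      intro p q hpq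
      rw [HGraph, SimpleGraph.fromRel_adj] at hpq
      obtain ⟨-, ⟨i, j, hp, hq, hij⟩ | ⟨i, j, hq, hp, hij⟩⟩ := hpq
      · subst hp; subst hq; exact hedge i j hij
      · subst hp; subst hq; exact (hedge i j hij).symm
    have hkey : ∀ i j, f (Sum.inl i) = f (Sum.inr j) := by
      intro i j
      obtain ⟨w⟩ := hconn.preconnected (Sum.inl i) (Sum.inr j)
      exact walk_const f hfadj w
    funext i j
    have hk := hkey i j
    simp only [hfdef, Sum.elim_inl, Sum.elim_inr] at hk
    have hz : D i j = 0 := by rw [hdec i j, hk]; abel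
    rw [hD] at hz
    simp only at hz
    exact sub_eq_zero.mp hz
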